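/- Let Sₙ be the sum of n i.i.d. St. Petersburg random variables. Then for every fixed n ≥ 1, liminf_{x→∞} x·P{Sₙ > x} = n and limsup_{x→∞} x·P{Sₙ > x} = 2n. -/

import Mathlib

open MeasureTheory ProbabilityTheory Filter Topology Set
open scoped ENNReal

section Aux

lemma stp_tail {Ω : Type*} [MeasurableSpace Ω] (μ : Measure Ω) [IsProbabilityMeasure μ]
    (Y : Ω → ℝ) (hmY : Measurable Y)
    (hdY : ∀ k : ℕ, 1 ≤ k → μ {ω | Y ω = 2 ^ k} = ((2 : ℝ≥0∞) ^ k)⁻¹) :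
    μ {ω | Y ω < 2} = 0 ∧
    ∀ (k : ℕ), 1 ≤ k → ∀ x : ℝ, (2:ℝ)^k ≤ x → x < 2^(k+1) →
      μ {ω | x < Y ω} = ((2 : ℝ≥0∞) ^ k)⁻¹ := by
  set A : ℕ → Set Ω := fun j => {ω | Y ω = 2 ^ (j + 1)} with hA
  have hAm : ∀ j, MeasurableSet (A j) := fun j =>
    hmY (measurableSet_singleton ((2:ℝ) ^ (j + 1)))
  have hval : ∀ j, μ (A j) = (2 : ℝ≥0∞)⁻¹ ^ (j + 1) := by
    intro j
    rw [hA]; rw [hdY (j + 1) (Nat.le_add_left 1 j), ← ENNReal.inv_pow]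
  have hinj : ∀ {i j : ℕ}, (2:ℝ) ^ (i+1) = (2:ℝ) ^ (j+1) → i = j := by
    intro i j h
    by_contra hc
    rcases Nat.lt_or_ge i j with h2 | h2
    · have := pow_lt_pow_right₀ (one_lt_two (α := ℝ)) (by omega : i+1 < j+1); linarith
    · have hij : j < i := by omega
      have := pow_lt_pow_right₀ (one_lt_two (α := ℝ)) (by omega : j+1 < i+1); linarith
  have hdisj : ∀ (g : ℕ → ℕ), Function.Injective g →
      Pairwise (Function.onFun Disjoint (fun m => A (g m))) := by
    intro g hg i j hij
    simp only [Function.onFun, Set.disjoint_left]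
    intro ω h1 h2
    exact hij (hg (hinj (h1.symm.trans h2)))
  have hgeom : ∑' j : ℕ, (2 : ℝ≥0∞)⁻¹ ^ (j + 1) = 1 := by
    rw [ENNReal.tsum_geometric_add_one, ENNReal.one_sub_inv_two, inv_inv,
      ENNReal.inv_mul_cancel (by norm_num) (by norm_num)]
  have hU : μ (⋃ j, A j) = 1 := by
    have hd0 : Pairwise (Function.onFun Disjoint A) := by
      simpa using hdisj id Function.injective_id
    rw [measure_iUnion hd0 hAm]
    simpa [hval] using hgeom
  have hUc : μ (⋃ j, A j)ᶜ = 0 := by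
    rw [measure_compl (MeasurableSet.iUnion hAm) (measure_ne_top μ _), hU, measure_univ,
      tsub_self]
  constructor
  · refine measure_mono_null (fun ω hω => ?_) hUc
    simp only [mem_compl_iff, mem_iUnion, not_exists]
    intro j hj
    have h2 : (2:ℝ) ≤ 2 ^ (j+1) := le_self_pow₀ one_le_two (Nat.succ_ne_zero j)
    have := hω.out
    rw [hj.out] at this
    linarith
  · intro k hk x hx1 hx2
    have hkey : {ω | x < Y ω} ∩ (⋃ j, A j) = ⋃ m, A (m + k) := by
      ext ω
      simp only [mem_inter_iff, mem_iUnion, mem_setOf_eq, hA]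
      constructor
      · rintro ⟨hlt, j, hj⟩
        have hjk : k ≤ j := by
          by_contra hc
          push_neg at hc
          have : (2:ℝ) ^ (j+1) ≤ 2 ^ k := pow_le_pow_right₀ one_le_two (by omega)
          rw [hj] at hlt; linarith
        exact ⟨j - k, by rw [Nat.sub_add_cancel hjk]; exact hj⟩
      · rintro ⟨m, hm⟩
        refine ⟨?_, m + k, hm⟩
        have : (2:ℝ) ^ (k+1) ≤ 2 ^ (m + k + 1) := pow_le_pow_right₀ one_le_two (by omega)
        rw [hm]; linarith
    have := measure_inter_conull (s := {ω | x < Y ω}) hUc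
    rw [← this, hkey, measure_iUnion (hdisj (· + k) (add_left_injective k)) (fun m => hAm _)]
    have : ∀ m, μ (A (m + k)) = (2 : ℝ≥0∞)⁻¹ ^ k * (2:ℝ≥0∞)⁻¹ ^ (m + 1) := by
      intro m; rw [hval]; ring
    rw [tsum_congr this, ENNReal.tsum_mul_left, hgeom, mul_one, ENNReal.inv_pow]


lemma stp_k {x : ℝ} (hx : 2 ≤ x) : ∃ k : ℕ, 1 ≤ k ∧ (2:ℝ)^k ≤ x ∧ x < 2^(k+1) := by
  have hx0 : (0:ℝ) ≤ x := by linarith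
  set m := ⌊x⌋₊ with hm
  have hm2 : 2 ≤ m := Nat.le_floor (by exact_mod_cast hx)
  set k := Nat.log 2 m with hk
  have hk1 : 1 ≤ k := by
    rw [hk]
    exact (Nat.le_log_iff_pow_le one_lt_two (by omega)).mpr (by simpa using hm2)
  have h1 : 2 ^ k ≤ m := Nat.pow_log_le_self 2 (by omega)
  have h2 : m < 2 ^ (k + 1) := Nat.lt_pow_succ_log_self one_lt_two m
  refine ⟨k, hk1, ?_, ?_⟩
  · calc (2:ℝ) ^ k = ((2 ^ k : ℕ) : ℝ) := by push_cast; ring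
      _ ≤ (m : ℝ) := by exact_mod_cast h1
      _ ≤ x := Nat.floor_le hx0
  · calc x < (m : ℝ) + 1 := Nat.lt_floor_add_one x
      _ ≤ ((2 ^ (k+1) : ℕ) : ℝ) := by exact_mod_cast h2
      _ = (2:ℝ) ^ (k+1) := by push_cast; ring


lemma stp_bonf {Ω : Type*} [MeasurableSpace Ω] (μ : Measure Ω)
    (A : ℕ → Set Ω) (hA : ∀ i, MeasurableSet (A i)) (n : ℕ) :
    ∑ i ∈ Finset.range n, μ (A i) ≤
      μ (⋃ i ∈ Finset.range n, A i) +
      ∑ i ∈ Finset.range n, ∑ j ∈ Finset.range i, μ (A i ∩ A j) := by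
  induction n with
  | zero => simp
  | succ n ih =>
    rw [Finset.sum_range_succ, Finset.sum_range_succ]
    have hU : MeasurableSet (⋃ i ∈ Finset.range n, A i) :=
      (Finset.range n).measurableSet_biUnion (fun i _ => hA i)
    have key : μ (A n) + μ (⋃ i ∈ Finset.range n, A i) =
        μ (A n ∪ ⋃ i ∈ Finset.range n, A i) + μ (A n ∩ ⋃ i ∈ Finset.range n, A i) :=
      (measure_union_add_inter (A n) hU).symm
    have h2 : μ (A n ∩ ⋃ i ∈ Finset.range n, A i) ≤ ∑ j ∈ Finset.range n, μ (A n ∩ A j) := by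
      rw [Set.inter_iUnion₂]
      exact measure_biUnion_finset_le _ _
    have h3 : A n ∪ ⋃ i ∈ Finset.range n, A i = ⋃ i ∈ Finset.range (n+1), A i := by
      rw [Finset.range_add_one, Finset.set_biUnion_insert]
    calc ∑ i ∈ Finset.range n, μ (A i) + μ (A n)
        ≤ (μ (⋃ i ∈ Finset.range n, A i) +
            ∑ i ∈ Finset.range n, ∑ j ∈ Finset.range i, μ (A i ∩ A j)) + μ (A n) :=
          add_le_add_left ih _
      _ = (μ (A n) + μ (⋃ i ∈ Finset.range n, A i)) +
            ∑ i ∈ Finset.range n, ∑ j ∈ Finset.range i, μ (A i ∩ A j) := by ring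
      _ = (μ (⋃ i ∈ Finset.range (n+1), A i) + μ (A n ∩ ⋃ i ∈ Finset.range n, A i)) +
            ∑ i ∈ Finset.range n, ∑ j ∈ Finset.range i, μ (A i ∩ A j) := by rw [key, h3]
      _ = μ (⋃ i ∈ Finset.range (n+1), A i) +
            (μ (A n ∩ ⋃ i ∈ Finset.range n, A i) +
              ∑ i ∈ Finset.range n, ∑ j ∈ Finset.range i, μ (A i ∩ A j)) := by ring
      _ ≤ μ (⋃ i ∈ Finset.range (n+1), A i) +
            ((∑ j ∈ Finset.range n, μ (A n ∩ A j)) +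
              ∑ i ∈ Finset.range n, ∑ j ∈ Finset.range i, μ (A i ∩ A j)) := by gcongr
      _ = μ (⋃ i ∈ Finset.range (n+1), A i) +
            (∑ i ∈ Finset.range n, ∑ j ∈ Finset.range i, μ (A i ∩ A j) +
              ∑ j ∈ Finset.range n, μ (A n ∩ A j)) := by ring


lemma stp_le_add {a b : ℝ} (h : ∀ ε : ℝ, 0 < ε → a ≤ b + ε) : a ≤ b := by
  by_contra hc
  push_neg at hc
  have := h ((a - b)/2) (by linarith)
  linarith

end Aux

set_option maxHeartbeats 2000000 in
theorem stmt_6 {Ω : Type*} [MeasurableSpace Ω] (μ : Measure Ω) [IsProbabilityMeasure μ]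
    (X : ℕ → Ω → ℝ) (hm : ∀ i, Measurable (X i))
    (hindep : iIndepFun X μ)
    (hd : ∀ i, ∀ k : ℕ, 1 ≤ k → μ {ω | X i ω = 2 ^ k} = ((2 : ℝ≥0∞) ^ k)⁻¹)
    (n : ℕ) (hn : 1 ≤ n) :
    liminf (fun x : ℝ =>
        x * (μ {ω | x < ∑ i ∈ Finset.range n, X i ω}).toReal) atTop = n ∧
    limsup (fun x : ℝ =>
        x * (μ {ω | x < ∑ i ∈ Finset.range n, X i ω}).toReal) atTop = 2 * n := by
  classical
  have htail := fun i => stp_tail μ (X i) (hm i) (hd i)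
  -- the common tail function
  set t : ℝ → ℝ := fun z => (μ {ω | z < X 0 ω}).toReal with ht
  have htnn : ∀ z, 0 ≤ t z := fun z => ENNReal.toReal_nonneg
  -- conversion of the ENNReal tail value
  have hconv : ∀ k : ℕ, ((2 : ℝ≥0∞) ^ k)⁻¹ = ENNReal.ofReal (((2:ℝ)^k)⁻¹) := by
    intro k
    rw [ENNReal.ofReal_inv_of_pos (by positivity), ENNReal.ofReal_pow (by norm_num)]
    norm_num
  have htoReal : ∀ k : ℕ, (((2 : ℝ≥0∞) ^ k)⁻¹).toReal = ((2:ℝ)^k)⁻¹ := by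
    intro k
    rw [ENNReal.toReal_inv, ENNReal.toReal_pow]
    norm_num
  -- value of t on dyadic windows
  have tval : ∀ m : ℕ, 1 ≤ m → ∀ z : ℝ, (2:ℝ)^m ≤ z → z < 2^(m+1) →
      t z = ((2:ℝ)^m)⁻¹ := by
    intro m hm1 z h1 h2
    rw [ht]
    simp only
    rw [(htail 0).2 m hm1 z h1 h2, htoReal]
  -- tail of every X i equals ofReal (t z), for z ≥ 2
  have hteq : ∀ z : ℝ, 2 ≤ z → ∀ i, μ {ω | z < X i ω} = ENNReal.ofReal (t z) := by
    intro z hz i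
    obtain ⟨k, hk, h1, h2⟩ := stp_k hz
    rw [(htail i).2 k hk z h1 h2, tval k hk z h1 h2, hconv]
  -- basic bounds on z * t z
  have htb : ∀ z : ℝ, 2 ≤ z → 1 ≤ z * t z ∧ z * t z < 2 := by
    intro z hz
    obtain ⟨k, hk, h1, h2⟩ := stp_k hz
    rw [tval k hk z h1 h2]
    have hp : (0:ℝ) < 2 ^ k := by positivity
    rw [← div_eq_mul_inv]
    constructor
    · rw [le_div_iff₀ hp]; linarith
    · rw [div_lt_iff₀ hp]
      have : (2:ℝ) * 2 ^ k = 2 ^ (k+1) := by ring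
      linarith
  -- measurability
  have hmB : ∀ (i : ℕ) (a : ℝ), MeasurableSet {ω | a < X i ω} :=
    fun i a => measurableSet_lt measurable_const (hm i)
  -- null set where some X i < 2
  set N : Set Ω := ⋃ i ∈ Finset.range n, {ω | X i ω < 2} with hN
  have hNnull : μ N = 0 := by
    refine le_antisymm ?_ zero_le
    calc μ N ≤ ∑ i ∈ Finset.range n, μ {ω | X i ω < 2} := measure_biUnion_finset_le _ _
      _ = 0 := by simp [fun i => (htail i).1]
  have hNge : ∀ ω, ω ∉ N → ∀ i ∈ Finset.range n, 2 ≤ X i ω := by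
    intro ω hω i hi
    by_contra hc
    push_neg at hc
    exact hω (Set.mem_biUnion hi hc)
  -- independence of tails
  have hpair : ∀ (i j : ℕ), i ≠ j → ∀ a b : ℝ,
      μ ({ω | a < X i ω} ∩ {ω | b < X j ω}) = μ {ω | a < X i ω} * μ {ω | b < X j ω} := by
    intro i j hij a b
    exact (hindep.indepFun hij).measure_inter_preimage_eq_mul (Set.Ioi a) (Set.Ioi b)
      measurableSet_Ioi measurableSet_Ioi
  have hn0 : (0:ℝ) < n := by exact_mod_cast hn
  -- E1 : crude union bound
  have E1 : ∀ x : ℝ, 2 * n ≤ x →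
      (μ {ω | x < ∑ i ∈ Finset.range n, X i ω}).toReal ≤ (n:ℝ) * t (x / n) := by
    intro x hx
    have hxn : 2 ≤ x / n := by rw [le_div_iff₀ hn0]; linarith
    have hincl : {ω | x < ∑ i ∈ Finset.range n, X i ω} ⊆
        ⋃ i ∈ Finset.range n, {ω | x / n < X i ω} := by
      intro ω hω
      by_contra hc
      simp only [Set.mem_iUnion, Set.mem_setOf_eq, not_exists] at hc
      have hsum : ∑ i ∈ Finset.range n, X i ω ≤ ∑ _i ∈ Finset.range n, x / n :=
        Finset.sum_le_sum (fun i hi => by have := hc i hi; push_neg at this; exact this)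
      rw [Finset.sum_const, Finset.card_range, nsmul_eq_mul] at hsum
      have : (n:ℝ) * (x / n) = x := by field_simp
      rw [this] at hsum
      exact absurd hω.out (not_lt.mpr hsum)
    have hle : μ {ω | x < ∑ i ∈ Finset.range n, X i ω} ≤
        (n : ℝ≥0∞) * ENNReal.ofReal (t (x / n)) := by
      calc μ {ω | x < ∑ i ∈ Finset.range n, X i ω}
          ≤ μ (⋃ i ∈ Finset.range n, {ω | x / n < X i ω}) := measure_mono hincl
        _ ≤ ∑ i ∈ Finset.range n, μ {ω | x / n < X i ω} := measure_biUnion_finset_le _ _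
        _ = (n : ℝ≥0∞) * ENNReal.ofReal (t (x / n)) := by
            rw [Finset.sum_congr rfl (fun i _ => hteq (x / n) hxn i), Finset.sum_const,
              Finset.card_range, nsmul_eq_mul]
    calc (μ {ω | x < ∑ i ∈ Finset.range n, X i ω}).toReal
        ≤ ((n : ℝ≥0∞) * ENNReal.ofReal (t (x / n))).toReal :=
          ENNReal.toReal_mono (by finiteness) hle
      _ = (n:ℝ) * t (x / n) := by
          simp [ENNReal.toReal_mul, ENNReal.toReal_ofReal (htnn _)]
  -- E2 : Bonferroni lower bound
  have E2 : ∀ x : ℝ, 2 ≤ x →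
      (n:ℝ) * t x ≤ (μ {ω | x < ∑ i ∈ Finset.range n, X i ω}).toReal + (n:ℝ)^2 * (t x)^2 := by
    intro x hx
    set q := ENNReal.ofReal (t x) with hq
    have hx0 : (0:ℝ) ≤ x := by linarith
    have hbonf := stp_bonf μ (fun i => {ω | x < X i ω}) (fun i => hmB i x) n
    have hincl : (⋃ i ∈ Finset.range n, {ω | x < X i ω}) ∩ Nᶜ ⊆
        {ω | x < ∑ i ∈ Finset.range n, X i ω} := by
      rintro ω ⟨hω1, hω2⟩
      simp only [Set.mem_iUnion, Set.mem_setOf_eq] at hω1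
      obtain ⟨i, hi, hxi⟩ := hω1
      have h8 : X i ω + ∑ j ∈ (Finset.range n).erase i, X j ω
          = ∑ j ∈ Finset.range n, X j ω := Finset.add_sum_erase _ (fun j => X j ω) hi
      have h9 : 0 ≤ ∑ j ∈ (Finset.range n).erase i, X j ω :=
        Finset.sum_nonneg (fun j hj => le_trans (by norm_num)
          (hNge ω hω2 j (Finset.mem_of_mem_erase hj)))
      have : x < ∑ j ∈ Finset.range n, X j ω := by rw [← h8]; linarith
      exact this
    have hU : μ (⋃ i ∈ Finset.range n, {ω | x < X i ω}) ≤
        μ {ω | x < ∑ i ∈ Finset.range n, X i ω} := by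
      rw [← measure_inter_conull (s := ⋃ i ∈ Finset.range n, {ω | x < X i ω})
        (t := Nᶜ) (by rwa [compl_compl])]
      exact measure_mono hincl
    have hL : ∑ i ∈ Finset.range n, μ {ω | x < X i ω} = (n : ℝ≥0∞) * q := by
      rw [Finset.sum_congr rfl (fun i _ => hteq x hx i), Finset.sum_const,
        Finset.card_range, nsmul_eq_mul]
    have hPP : ∑ i ∈ Finset.range n, ∑ j ∈ Finset.range i,
        μ ({ω | x < X i ω} ∩ {ω | x < X j ω}) ≤ (n : ℝ≥0∞)^2 * q^2 := by
      have hterm : ∀ i ∈ Finset.range n, ∀ j ∈ Finset.range i,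
          μ ({ω | x < X i ω} ∩ {ω | x < X j ω}) = q * q := by
        intro i _ j hj
        have hij : i ≠ j := by
          have := Finset.mem_range.mp hj; omega
        rw [hpair i j hij x x, hteq x hx i, hteq x hx j]
      calc ∑ i ∈ Finset.range n, ∑ j ∈ Finset.range i,
            μ ({ω | x < X i ω} ∩ {ω | x < X j ω})
          ≤ ∑ _i ∈ Finset.range n, ∑ _j ∈ Finset.range n, q * q := by
            refine Finset.sum_le_sum (fun i hi => ?_)
            calc ∑ j ∈ Finset.range i, μ ({ω | x < X i ω} ∩ {ω | x < X j ω})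
                = ∑ _j ∈ Finset.range i, q * q :=
                  Finset.sum_congr rfl (fun j hj => hterm i hi j hj)
              _ ≤ ∑ _j ∈ Finset.range n, q * q := by
                  refine Finset.sum_le_sum_of_subset ?_
                  exact Finset.range_subset_range.mpr (le_of_lt (Finset.mem_range.mp hi))
        _ = (n : ℝ≥0∞)^2 * q^2 := by
            simp only [Finset.sum_const, Finset.card_range, nsmul_eq_mul]
            ring
    have hmain : (n : ℝ≥0∞) * q ≤
        μ {ω | x < ∑ i ∈ Finset.range n, X i ω} + (n : ℝ≥0∞)^2 * q^2 := by
      calc (n : ℝ≥0∞) * q = ∑ i ∈ Finset.range n, μ {ω | x < X i ω} := hL.symm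
        _ ≤ μ (⋃ i ∈ Finset.range n, {ω | x < X i ω}) +
            ∑ i ∈ Finset.range n, ∑ j ∈ Finset.range i,
              μ ({ω | x < X i ω} ∩ {ω | x < X j ω}) := hbonf
        _ ≤ μ {ω | x < ∑ i ∈ Finset.range n, X i ω} + (n : ℝ≥0∞)^2 * q^2 :=
            add_le_add hU hPP
    have hq2 : (n : ℝ≥0∞)^2 * q^2 ≠ ⊤ :=
      ENNReal.mul_ne_top (ENNReal.pow_ne_top (ENNReal.natCast_ne_top n))
        (ENNReal.pow_ne_top ENNReal.ofReal_ne_top)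
    have hfin : μ {ω | x < ∑ i ∈ Finset.range n, X i ω} + (n : ℝ≥0∞)^2 * q^2 ≠ ⊤ :=
      ENNReal.add_ne_top.mpr ⟨measure_ne_top μ _, hq2⟩
    have := ENNReal.toReal_mono hfin hmain
    rw [ENNReal.toReal_mul, ENNReal.toReal_add (measure_ne_top μ _) hq2,
      ENNReal.toReal_mul, ENNReal.toReal_pow, ENNReal.toReal_pow,
      ENNReal.toReal_ofReal (htnn x)] at this
    simpa using this
  -- E3 : upper bound via one-big-jump decomposition
  have E3 : ∀ x y : ℝ, 2 ≤ y → 2 ≤ x - ((n:ℝ)-1)*y →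
      (μ {ω | x < ∑ i ∈ Finset.range n, X i ω}).toReal ≤
        (n:ℝ) * t (x - ((n:ℝ)-1)*y) + (n:ℝ)^2 * (t y)^2 := by
    intro x y hy hz
    set z := x - ((n:ℝ)-1)*y with hzdef
    set q := ENNReal.ofReal (t y) with hq
    have hincl : {ω | x < ∑ i ∈ Finset.range n, X i ω} ⊆
        (⋃ i ∈ Finset.range n, {ω | z < X i ω}) ∪
        (⋃ i ∈ Finset.range n, ⋃ j ∈ Finset.range i,
          ({ω | y < X i ω} ∩ {ω | y < X j ω})) := by
      intro ω hω
      by_cases hp : ∃ i ∈ Finset.range n, ∃ j ∈ Finset.range i, y < X i ω ∧ y < X j ω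
      · right
        obtain ⟨i, hi, j, hj, h1, h2⟩ := hp
        refine Set.mem_biUnion hi (Set.mem_biUnion hj ⟨h1, h2⟩)
      · left
        push_neg at hp
        have hne : (Finset.range n).Nonempty := Finset.nonempty_range_iff.mpr (by omega)
        obtain ⟨i₀, hi₀, hmax⟩ := Finset.exists_max_image (Finset.range n) (fun i => X i ω) hne
        have hsmall : ∀ j ∈ Finset.range n, j ≠ i₀ → X j ω ≤ y := by
          intro j hj hne'
          by_contra hc
          push_neg at hc
          have hyi0 : y < X i₀ ω := lt_of_lt_of_le hc (hmax j hj)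
          rcases lt_or_gt_of_ne hne' with hlt | hgt
          · exact absurd (hp i₀ hi₀ j (Finset.mem_range.mpr hlt) hyi0) (not_le.mpr hc)
          · exact absurd (hp j hj i₀ (Finset.mem_range.mpr hgt) hc) (not_le.mpr hyi0)
        have hsum : ∑ j ∈ (Finset.range n).erase i₀, X j ω ≤ ((n:ℝ)-1) * y := by
          have h1 : ∑ j ∈ (Finset.range n).erase i₀, X j ω ≤
              ((Finset.range n).erase i₀).card • y :=
            Finset.sum_le_card_nsmul _ _ y
              (fun j hj => hsmall j (Finset.mem_of_mem_erase hj) (Finset.ne_of_mem_erase hj))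
          rw [Finset.card_erase_of_mem hi₀, Finset.card_range, nsmul_eq_mul] at h1
          have : ((n - 1 : ℕ) : ℝ) = (n:ℝ) - 1 := by
            rw [Nat.cast_sub hn]; norm_num
          rw [this] at h1
          exact h1
        have h8 : X i₀ ω + ∑ j ∈ (Finset.range n).erase i₀, X j ω
            = ∑ j ∈ Finset.range n, X j ω := Finset.add_sum_erase _ (fun j => X j ω) hi₀
        have hx' : x < ∑ j ∈ Finset.range n, X j ω := hω.out
        have : z < X i₀ ω := by rw [hzdef]; linarith [h8, hsum, hx']
        exact Set.mem_biUnion hi₀ this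
    have hB : μ (⋃ i ∈ Finset.range n, ⋃ j ∈ Finset.range i,
        ({ω | y < X i ω} ∩ {ω | y < X j ω})) ≤ (n : ℝ≥0∞)^2 * q^2 := by
      calc μ (⋃ i ∈ Finset.range n, ⋃ j ∈ Finset.range i,
            ({ω | y < X i ω} ∩ {ω | y < X j ω}))
          ≤ ∑ i ∈ Finset.range n, μ (⋃ j ∈ Finset.range i,
              ({ω | y < X i ω} ∩ {ω | y < X j ω})) := measure_biUnion_finset_le _ _
        _ ≤ ∑ i ∈ Finset.range n, ∑ j ∈ Finset.range i,
              μ ({ω | y < X i ω} ∩ {ω | y < X j ω}) :=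
            Finset.sum_le_sum (fun i _ => measure_biUnion_finset_le _ _)
        _ ≤ ∑ _i ∈ Finset.range n, ∑ _j ∈ Finset.range n, q * q := by
            refine Finset.sum_le_sum (fun i hi => ?_)
            have hterm : ∀ j ∈ Finset.range i,
                μ ({ω | y < X i ω} ∩ {ω | y < X j ω}) = q * q := by
              intro j hj
              have hij : i ≠ j := by have := Finset.mem_range.mp hj; omega
              rw [hpair i j hij y y, hteq y hy i, hteq y hy j]
            calc ∑ j ∈ Finset.range i, μ ({ω | y < X i ω} ∩ {ω | y < X j ω})
                = ∑ _j ∈ Finset.range i, q * q := Finset.sum_congr rfl hterm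
              _ ≤ ∑ _j ∈ Finset.range n, q * q :=
                  Finset.sum_le_sum_of_subset
                    (Finset.range_subset_range.mpr (le_of_lt (Finset.mem_range.mp hi)))
        _ = (n : ℝ≥0∞)^2 * q^2 := by
            simp only [Finset.sum_const, Finset.card_range, nsmul_eq_mul]
            ring
    have hA : μ (⋃ i ∈ Finset.range n, {ω | z < X i ω}) ≤
        (n : ℝ≥0∞) * ENNReal.ofReal (t z) := by
      calc μ (⋃ i ∈ Finset.range n, {ω | z < X i ω})
          ≤ ∑ i ∈ Finset.range n, μ {ω | z < X i ω} := measure_biUnion_finset_le _ _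
        _ = (n : ℝ≥0∞) * ENNReal.ofReal (t z) := by
            rw [Finset.sum_congr rfl (fun i _ => hteq z hz i), Finset.sum_const,
              Finset.card_range, nsmul_eq_mul]
    have hmain : μ {ω | x < ∑ i ∈ Finset.range n, X i ω} ≤
        (n : ℝ≥0∞) * ENNReal.ofReal (t z) + (n : ℝ≥0∞)^2 * q^2 :=
      le_trans (le_trans (measure_mono hincl) (measure_union_le _ _)) (add_le_add hA hB)
    have hfin : (n : ℝ≥0∞) * ENNReal.ofReal (t z) + (n : ℝ≥0∞)^2 * q^2 ≠ ⊤ :=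
      ENNReal.add_ne_top.mpr
        ⟨ENNReal.mul_ne_top (ENNReal.natCast_ne_top n) ENNReal.ofReal_ne_top,
         ENNReal.mul_ne_top (ENNReal.pow_ne_top (ENNReal.natCast_ne_top n))
           (ENNReal.pow_ne_top ENNReal.ofReal_ne_top)⟩
    have := ENNReal.toReal_mono hfin hmain
    rw [ENNReal.toReal_add
        (ENNReal.mul_ne_top (ENNReal.natCast_ne_top n) ENNReal.ofReal_ne_top)
        (ENNReal.mul_ne_top (ENNReal.pow_ne_top (ENNReal.natCast_ne_top n))
          (ENNReal.pow_ne_top ENNReal.ofReal_ne_top)),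
      ENNReal.toReal_mul, ENNReal.toReal_mul, ENNReal.toReal_pow, ENNReal.toReal_pow,
      ENNReal.toReal_ofReal (htnn z), ENNReal.toReal_ofReal (htnn y)] at this
    simpa using this
  -- notation
  set f : ℝ → ℝ := fun x => x * (μ {ω | x < ∑ i ∈ Finset.range n, X i ω}).toReal with hfdef
  have hPnn : ∀ x : ℝ, 0 ≤ (μ {ω | x < ∑ i ∈ Finset.range n, X i ω}).toReal :=
    fun x => ENNReal.toReal_nonneg
  have htle : ∀ z : ℝ, 2 ≤ z → t z ≤ 2 / z := by
    intro z hz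
    have hz0 : (0:ℝ) < z := by linarith
    rw [le_div_iff₀ hz0]
    have := (htb z hz).2
    linarith [mul_comm z (t z)]
  -- eventual upper bound for f
  have hfub : ∀ᶠ x in atTop, f x ≤ 2 * (n:ℝ)^2 := by
    filter_upwards [eventually_ge_atTop (max (2 * (n:ℝ)) 1)] with x hx
    have hx1 : 2 * (n:ℝ) ≤ x := le_trans (le_max_left _ _) hx
    have hx0 : (0:ℝ) < x := lt_of_lt_of_le one_pos (le_trans (le_max_right _ _) hx)
    have hxn : 2 ≤ x / n := by rw [le_div_iff₀ hn0]; linarith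
    have h1 := E1 x hx1
    have h2 := (htb (x / n) hxn).2
    have : f x ≤ x * ((n:ℝ) * t (x / n)) :=
      mul_le_mul_of_nonneg_left h1 (le_of_lt hx0)
    have hid : x * ((n:ℝ) * t (x / n)) = (n:ℝ)^2 * (x / n * t (x / n)) := by
      field_simp
    have hnn2 : (0:ℝ) ≤ (n:ℝ)^2 := by positivity
    nlinarith [mul_le_mul_of_nonneg_left (le_of_lt h2) hnn2]
  have hflb : ∀ᶠ x in atTop, (0:ℝ) ≤ f x := by
    filter_upwards [eventually_ge_atTop (0:ℝ)] with x hx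
    exact mul_nonneg hx (hPnn x)
  have hbddub : IsBoundedUnder (· ≤ ·) atTop f := isBoundedUnder_of_eventually_le hfub
  have hbddlb : IsBoundedUnder (· ≥ ·) atTop f := isBoundedUnder_of_eventually_ge hflb
  have hcoble : IsCoboundedUnder (· ≤ ·) atTop f := hbddlb.isCoboundedUnder_le
  have hcobge : IsCoboundedUnder (· ≥ ·) atTop f := hbddub.isCoboundedUnder_ge
  -- lower estimate on f at every point ≥ 2
  have hflow : ∀ x : ℝ, 2 ≤ x → (n:ℝ) * (x * t x) - (n:ℝ)^2 * (4 / x) ≤ f x := by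
    intro x hx
    have hx0 : (0:ℝ) < x := by linarith
    have h2 := E2 x hx
    have hmul := mul_le_mul_of_nonneg_left h2 (le_of_lt hx0)
    -- x * (n * t x) ≤ x * (Pn + n^2 (t x)^2)
    have htx := htb x hx
    have htl := htle x hx
    have htn := htnn x
    have hxt2 : x * ((n:ℝ)^2 * (t x)^2) ≤ (n:ℝ)^2 * (4 / x) := by
      have key : (x * t x) * t x ≤ 2 * (2 / x) :=
        mul_le_mul (le_of_lt htx.2) htl htn (by norm_num)
      have hid : x * ((n:ℝ)^2 * (t x)^2) = (n:ℝ)^2 * ((x * t x) * t x) := by ring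
      have h4 : (2:ℝ) * (2 / x) = 4 / x := by ring
      rw [hid]
      rw [h4] at key
      exact mul_le_mul_of_nonneg_left key (by positivity)
    have hexp : x * ((n:ℝ) * t x) = (n:ℝ) * (x * t x) := by ring
    rw [hfdef]
    simp only
    nlinarith [hPnn x]
  -- fact 1 : n ≤ liminf
  have fact1 : (n:ℝ) ≤ liminf f atTop := by
    refine le_of_forall_sub_le (fun ε hε => ?_)
    refine le_liminf_of_le hcobge ?_
    filter_upwards [eventually_ge_atTop (max 2 ((n:ℝ)^2 * 4 / ε))] with x hx
    have hx2 : 2 ≤ x := le_trans (le_max_left _ _) hx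
    have hx0 : (0:ℝ) < x := by linarith
    have hxe : (n:ℝ)^2 * 4 / ε ≤ x := le_trans (le_max_right _ _) hx
    have h1 := hflow x hx2
    have h2 : (n:ℝ)^2 * (4 / x) ≤ ε := by
      rw [show (n:ℝ)^2 * (4 / x) = (n:ℝ)^2 * 4 / x by ring, div_le_iff₀ hx0]
      rw [div_le_iff₀ hε] at hxe
      linarith [mul_comm ε x]
    have h3 : 1 ≤ x * t x := (htb x hx2).1
    have h4 : (n:ℝ) * 1 ≤ (n:ℝ) * (x * t x) :=
      mul_le_mul_of_nonneg_left h3 (by positivity)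
    linarith
  -- fact 4 : 2n ≤ limsup
  have fact4 : 2*(n:ℝ) ≤ limsup f atTop := by
    refine le_of_forall_sub_le (fun ε hε => ?_)
    set δ := min (ε/(2*(n:ℝ)+1)) (1/2) with hδ
    have hδ0 : 0 < δ := lt_min (by positivity) one_half_pos
    have hδ2 : δ ≤ 1/2 := min_le_right _ _
    have hδε : (2*(n:ℝ)+1) * δ ≤ ε := by
      have h := min_le_left (ε/(2*(n:ℝ)+1)) (1/2)
      rw [← hδ, le_div_iff₀ (by positivity)] at h
      linarith [mul_comm δ (2*(n:ℝ)+1)]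
    refine le_limsup_of_frequently_le ?_ hbddub
    rw [frequently_atTop]
    intro a
    obtain ⟨m, hmm⟩ := pow_unbounded_of_one_lt
      (max a (max 2 ((n:ℝ)^2*4/δ))) (one_lt_two (α := ℝ))
    have h2m : (2:ℝ) < 2^m := lt_of_le_of_lt (le_trans (le_max_left _ _) (le_max_right a _)) hmm
    have hm1 : 1 ≤ m := by
      by_contra hc
      push_neg at hc
      interval_cases m
      norm_num at h2m
    have hpm : (0:ℝ) < 2^m := by positivity
    set x := (2:ℝ)^(m+1) * (1-δ) with hxdef
    have hδ1 : δ < 1 := by linarith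
    have hwin1 : (2:ℝ)^m ≤ x := by
      rw [hxdef, pow_succ]
      nlinarith
    have hwin2 : x < 2^(m+1) := by
      rw [hxdef]
      nlinarith [pow_pos (show (0:ℝ) < 2 by norm_num) (m+1)]
    have hx2 : 2 ≤ x := le_trans (le_of_lt h2m) hwin1
    have hxa : a ≤ x := le_trans (le_of_lt (lt_of_le_of_lt (le_max_left _ _) hmm)) hwin1
    have hxd : (n:ℝ)^2*4/δ ≤ x :=
      le_trans (le_of_lt (lt_of_le_of_lt (le_trans (le_max_right _ _) (le_max_right a _)) hmm)) hwin1
    refine ⟨x, hxa, ?_⟩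
    have htv : t x = ((2:ℝ)^m)⁻¹ := tval m hm1 x hwin1 hwin2
    have hxt : x * t x = 2*(1-δ) := by
      rw [htv, hxdef, pow_succ]
      field_simp
    have h1 := hflow x hx2
    rw [hxt] at h1
    have hx0 : (0:ℝ) < x := by linarith
    have h2 : (n:ℝ)^2 * (4 / x) ≤ δ := by
      rw [show (n:ℝ)^2 * (4 / x) = (n:ℝ)^2 * 4 / x by ring, div_le_iff₀ hx0]
      rw [div_le_iff₀ hδ0] at hxd
      linarith [mul_comm δ x]
    nlinarith
  -- fact 2 : liminf ≤ n
  have hn1 : (1:ℝ) ≤ (n:ℝ) := by exact_mod_cast hn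
  have fact2 : liminf f atTop ≤ (n:ℝ) := by
    refine stp_le_add (fun ε hε => ?_)
    set δ := min (ε/((n:ℝ)+1)) (1/2) with hδ
    have hδ0 : 0 < δ := lt_min (by positivity) one_half_pos
    have hδ2 : δ ≤ 1/2 := min_le_right _ _
    have hδ1 : δ < 1 := by linarith
    have hδε : ((n:ℝ)+1) * δ ≤ ε := by
      have h := min_le_left (ε/((n:ℝ)+1)) (1/2)
      rw [← hδ, le_div_iff₀ (by positivity)] at h
      linarith [mul_comm δ ((n:ℝ)+1)]
    have hb : liminf f atTop ≤ (n:ℝ)*(1+δ) + δ := by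
      refine liminf_le_of_frequently_le ?_ hbddlb
      rw [frequently_atTop]
      intro a
      set ε' := δ/((n:ℝ)*(1+δ)) with hε'
      have hε'0 : 0 < ε' := div_pos hδ0 (mul_pos hn0 (by linarith))
      obtain ⟨m, hmm⟩ := pow_unbounded_of_one_lt
        (max a (max 2 (max (2/ε') ((n:ℝ)^2*4/(ε'^2*δ))))) (one_lt_two (α := ℝ))
      have h2m : (2:ℝ) < 2^m :=
        lt_of_le_of_lt (le_trans (le_max_left _ _) (le_max_right a _)) hmm
      have hm1 : 1 ≤ m := by
        by_contra hc
        push_neg at hc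
        interval_cases m
        norm_num at h2m
      have hpm : (0:ℝ) < 2^m := by positivity
      set x := (2:ℝ)^m * (1+δ) with hxdef
      have hxgm : (2:ℝ)^m ≤ x := le_mul_of_one_le_right hpm.le (by linarith)
      have hxa : a ≤ x := le_trans (le_of_lt (lt_of_le_of_lt (le_max_left _ _) hmm)) hxgm
      have hx2 : 2 ≤ x := le_trans (le_of_lt h2m) hxgm
      have hx2e : 2/ε' ≤ x := by
        refine le_trans (le_of_lt (lt_of_le_of_lt ?_ hmm)) hxgm
        exact le_trans (le_trans (le_max_left _ _) (le_max_right 2 _)) (le_max_right a _)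
      have hxd : (n:ℝ)^2*4/(ε'^2*δ) ≤ x := by
        refine le_trans (le_of_lt (lt_of_le_of_lt ?_ hmm)) hxgm
        exact le_trans (le_trans (le_max_right _ _) (le_max_right 2 _)) (le_max_right a _)
      have hx0 : (0:ℝ) < x := by linarith
      set y := ε' * x with hy
      have hy2 : 2 ≤ y := by
        rw [hy]
        rw [div_le_iff₀ hε'0] at hx2e
        linarith [mul_comm x ε']
      have hy0 : (0:ℝ) < y := by linarith
      set z := x - ((n:ℝ)-1)*y with hz
      have hzx : z ≤ x := by
        rw [hz]
        nlinarith
      have hkey : ((n:ℝ)-1)*ε' ≤ δ/(1+δ) := by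
        have h1p : (0:ℝ) < 1+δ := by linarith
        have hee : ((n:ℝ)-1)*ε' = ((n:ℝ)-1)*δ/((n:ℝ)*(1+δ)) := by rw [hε']; ring
        rw [hee, div_le_div_iff₀ (mul_pos hn0 h1p) h1p]
        nlinarith
      have hzc : z = x*(1-((n:ℝ)-1)*ε') := by rw [hz, hy]; ring
      have hwz1 : (2:ℝ)^m ≤ z := by
        have e1 : (1+δ)*(1-δ/(1+δ)) = 1 := by field_simp; ring
        rw [hzc, hxdef]
        nlinarith
      have hwz2 : z < 2^(m+1) := by
        refine lt_of_le_of_lt hzx ?_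
        rw [hxdef, pow_succ]
        nlinarith
      have hz2 : 2 ≤ z := le_trans (le_of_lt h2m) hwz1
      have hE3 := E3 x y hy2 hz2
      have htvz : t z = ((2:ℝ)^m)⁻¹ := tval m hm1 z hwz1 hwz2
      rw [← hz, htvz] at hE3
      refine ⟨x, hxa, ?_⟩
      have hterm1 : x * ((n:ℝ)*((2:ℝ)^m)⁻¹) = (n:ℝ)*(1+δ) := by
        rw [hxdef]
        field_simp
      have hty : t y ≤ 2/y := htle y hy2
      have htynn := htnn y
      have hsq : (t y)^2 ≤ (2/y)^2 := by nlinarith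
      have hterm2 : x * ((n:ℝ)^2*(t y)^2) ≤ δ := by
        have h1 : x * ((n:ℝ)^2*(t y)^2) ≤ x * ((n:ℝ)^2*(2/y)^2) := by
          refine mul_le_mul_of_nonneg_left ?_ hx0.le
          exact mul_le_mul_of_nonneg_left hsq (by positivity)
        have h2 : x * ((n:ℝ)^2*(2/y)^2) = (n:ℝ)^2*4/(ε'^2*x) := by
          rw [hy]
          field_simp
          ring
        have h3 : (n:ℝ)^2*4/(ε'^2*x) ≤ δ := by
          rw [div_le_iff₀ (by positivity)]
          rw [div_le_iff₀ (by positivity)] at hxd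
          nlinarith
        linarith
      have hfx : f x = x * (μ {ω | x < ∑ i ∈ Finset.range n, X i ω}).toReal := rfl
      have hmul := mul_le_mul_of_nonneg_left hE3 hx0.le
      rw [hfx]
      calc x * (μ {ω | x < ∑ i ∈ Finset.range n, X i ω}).toReal
          ≤ x * ((n:ℝ)*((2:ℝ)^m)⁻¹ + (n:ℝ)^2*(t y)^2) := hmul
        _ = x * ((n:ℝ)*((2:ℝ)^m)⁻¹) + x * ((n:ℝ)^2*(t y)^2) := by ring
        _ ≤ (n:ℝ)*(1+δ) + δ := by rw [hterm1]; linarith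
    linarith
  -- fact 3 : limsup ≤ 2n
  have fact3 : limsup f atTop ≤ 2*(n:ℝ) := by
    refine stp_le_add (fun ε hε => ?_)
    set δ := min (ε/(2*(n:ℝ)+1)) (1/2) with hδ
    have hδ0 : 0 < δ := lt_min (by positivity) one_half_pos
    have hδ2 : δ ≤ 1/2 := min_le_right _ _
    have hδ1 : δ < 1 := by linarith
    have hδε : (2*(n:ℝ)+1) * δ ≤ ε := by
      have h := min_le_left (ε/(2*(n:ℝ)+1)) (1/2)
      rw [← hδ, le_div_iff₀ (by positivity)] at h
      linarith [mul_comm δ (2*(n:ℝ)+1)]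
    have hb : limsup f atTop ≤ 2*(n:ℝ)*(1+δ) + δ := by
      refine limsup_le_of_le hcoble ?_
      set ε' := δ/(2*(n:ℝ)) with hε'
      have hε'0 : 0 < ε' := div_pos hδ0 (by linarith)
      filter_upwards [eventually_ge_atTop (max (2/ε') (max 4 ((n:ℝ)^2*4/(ε'^2*δ))))] with x hx
      have hx2e : 2/ε' ≤ x := le_trans (le_max_left _ _) hx
      have hx4 : 4 ≤ x := le_trans (le_trans (le_max_left _ _) (le_max_right (2/ε') _)) hx
      have hxd : (n:ℝ)^2*4/(ε'^2*δ) ≤ x :=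
        le_trans (le_trans (le_max_right _ _) (le_max_right (2/ε') _)) hx
      have hx0 : (0:ℝ) < x := by linarith
      set y := ε' * x with hy
      have hy2 : 2 ≤ y := by
        rw [hy]
        rw [div_le_iff₀ hε'0] at hx2e
        linarith [mul_comm x ε']
      have hy0 : (0:ℝ) < y := by linarith
      set z := x - ((n:ℝ)-1)*y with hz
      have hkey : ((n:ℝ)-1)*ε' ≤ δ/2 := by
        have hee : ((n:ℝ)-1)*ε' = ((n:ℝ)-1)*δ/(2*(n:ℝ)) := by rw [hε']; ring
        rw [hee, div_le_div_iff₀ (by linarith) (by norm_num : (0:ℝ) < 2)]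
        nlinarith
      have hzc : z = x*(1-((n:ℝ)-1)*ε') := by rw [hz, hy]; ring
      have hc34 : (3:ℝ)/4 ≤ 1-((n:ℝ)-1)*ε' := by linarith
      have hz2 : 2 ≤ z := by
        rw [hzc]
        nlinarith
      have hz0 : (0:ℝ) < z := by linarith
      have hE3 := E3 x y hy2 hz2
      rw [← hz] at hE3
      have htzb : t z ≤ 2/z := htle z hz2
      have htznn := htnn z
      -- x * t z ≤ 2*(1+δ)
      have hxtz : x * t z ≤ 2*(1+δ) := by
        have h1 : x * t z ≤ x * (2/z) := mul_le_mul_of_nonneg_left htzb hx0.le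
        have h2 : x * (2/z) ≤ 2*(1+δ) := by
          have hcge : 1 ≤ (1+δ)*(1-((n:ℝ)-1)*ε') := by nlinarith
          have hxz : x ≤ (1+δ)*z := by
            rw [hzc]
            nlinarith
          rw [← mul_div_assoc, div_le_iff₀ hz0]
          linarith
        linarith
      have hty : t y ≤ 2/y := htle y hy2
      have htynn := htnn y
      have hsq : (t y)^2 ≤ (2/y)^2 := by nlinarith
      have hterm2 : x * ((n:ℝ)^2*(t y)^2) ≤ δ := by
        have h1 : x * ((n:ℝ)^2*(t y)^2) ≤ x * ((n:ℝ)^2*(2/y)^2) := by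
          refine mul_le_mul_of_nonneg_left ?_ hx0.le
          exact mul_le_mul_of_nonneg_left hsq (by positivity)
        have h2 : x * ((n:ℝ)^2*(2/y)^2) = (n:ℝ)^2*4/(ε'^2*x) := by
          rw [hy]
          field_simp
          ring
        have h3 : (n:ℝ)^2*4/(ε'^2*x) ≤ δ := by
          rw [div_le_iff₀ (by positivity)]
          rw [div_le_iff₀ (by positivity)] at hxd
          nlinarith
        linarith
      have hfx : f x = x * (μ {ω | x < ∑ i ∈ Finset.range n, X i ω}).toReal := rfl
      have hmul := mul_le_mul_of_nonneg_left hE3 hx0.le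
      rw [hfx]
      calc x * (μ {ω | x < ∑ i ∈ Finset.range n, X i ω}).toReal
          ≤ x * ((n:ℝ) * t z + (n:ℝ)^2*(t y)^2) := hmul
        _ = (n:ℝ) * (x * t z) + x * ((n:ℝ)^2*(t y)^2) := by ring
        _ ≤ (n:ℝ) * (2*(1+δ)) + δ := by
            refine add_le_add ?_ hterm2
            exact mul_le_mul_of_nonneg_left hxtz (by positivity)
        _ = 2*(n:ℝ)*(1+δ) + δ := by ring
    linarith
  constructor
  · exact le_antisymm fact2 fact1
  · exact le_antisymm fact3 fact4
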